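/- Let V and W be complex vector spaces, e₁, e₂ ∈ V linearly independent, and f₁, f₂, f₃ ∈ W linearly independent. If u·(e₁ ⊗ f₁) + v·(e₂ ⊗ f₂) + w·(e₂ ⊗ f₃) is a simple tensor x ⊗ y, then u = 0 or (v = 0 and w = 0). -/

import Mathlib

open TensorProduct

lemma exists_dual_family {ι : Type*} [DecidableEq ι] {V : Type*} [AddCommGroup V]
    [Module ℂ V] {v : ι → V} (hv : LinearIndependent ℂ v) :
    ∃ g : ι → (V →ₗ[ℂ] ℂ), ∀ i j, g i (v j) = if i = j then 1 else 0 := by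
  let b := Module.Basis.span hv
  have key : ∀ i : ι, ∃ g : V →ₗ[ℂ] ℂ, ∀ j, g (v j) = if i = j then 1 else 0 := by
    intro i
    obtain ⟨g, hg⟩ := LinearMap.exists_extend (b.coord i)
    refine ⟨g, fun j => ?_⟩
    have hb : (b j : V) = v j := congrArg Subtype.val (Module.Basis.span_apply hv j)
    have : g (v j) = b.coord i (b j) := by
      rw [← hb]
      exact LinearMap.congr_fun hg (b j)
    rw [this, b.coord_apply, b.repr_self]
    simp [Finsupp.single_apply, eq_comm]
  choose g hg using key
  exact ⟨g, hg⟩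

/-- Pairing of functionals against a tensor. -/
noncomputable def tpair {V W : Type*} [AddCommGroup V] [Module ℂ V]
    [AddCommGroup W] [Module ℂ W] (φ : V →ₗ[ℂ] ℂ) (ψ : W →ₗ[ℂ] ℂ) :
    V ⊗[ℂ] W →ₗ[ℂ] ℂ :=
  (TensorProduct.lid ℂ ℂ).toLinearMap ∘ₗ TensorProduct.map φ ψ

@[simp] lemma tpair_tmul {V W : Type*} [AddCommGroup V] [Module ℂ V]
    [AddCommGroup W] [Module ℂ W] (φ : V →ₗ[ℂ] ℂ) (ψ : W →ₗ[ℂ] ℂ)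
    (x : V) (y : W) : tpair φ ψ (x ⊗ₜ[ℂ] y) = φ x * ψ y := by
  simp [tpair, smul_eq_mul]

theorem stmt_3 {V W : Type*} [AddCommGroup V] [Module ℂ V]
    [AddCommGroup W] [Module ℂ W]
    (e1 e2 : V) (f1 f2 f3 : W)
    (he : LinearIndependent ℂ ![e1, e2])
    (hf : LinearIndependent ℂ ![f1, f2, f3])
    (u v w : ℂ)
    (h : ∃ (x : V) (y : W),
      u • (e1 ⊗ₜ[ℂ] f1) + v • (e2 ⊗ₜ[ℂ] f2) + w • (e2 ⊗ₜ[ℂ] f3) = x ⊗ₜ[ℂ] y) :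
    u = 0 ∨ (v = 0 ∧ w = 0) := by
  obtain ⟨x, y, hxy⟩ := h
  obtain ⟨φ, hφ⟩ := exists_dual_family he
  obtain ⟨ψ, hψ⟩ := exists_dual_family hf
  have hφ11 : φ 0 e1 = 1 := by simpa using hφ 0 0
  have hφ12 : φ 0 e2 = 0 := by simpa using hφ 0 1
  have hφ21 : φ 1 e1 = 0 := by simpa using hφ 1 0
  have hφ22 : φ 1 e2 = 1 := by simpa using hφ 1 1
  have hψ11 : ψ 0 f1 = 1 := by simpa using hψ 0 0
  have hψ12 : ψ 0 f2 = 0 := by simpa using hψ 0 1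
  have hψ13 : ψ 0 f3 = 0 := by simpa using hψ 0 2
  have hψ21 : ψ 1 f1 = 0 := by simpa using hψ 1 0
  have hψ22 : ψ 1 f2 = 1 := by simpa using hψ 1 1
  have hψ23 : ψ 1 f3 = 0 := by simpa using hψ 1 2
  have hψ31 : ψ 2 f1 = 0 := by simpa using hψ 2 0
  have hψ32 : ψ 2 f2 = 0 := by simpa using hψ 2 1
  have hψ33 : ψ 2 f3 = 1 := by simpa using hψ 2 2
  have key : ∀ (i : Fin 2) (j : Fin 3),
      tpair (φ i) (ψ j) (u • (e1 ⊗ₜ[ℂ] f1) + v • (e2 ⊗ₜ[ℂ] f2) + w • (e2 ⊗ₜ[ℂ] f3))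
        = φ i x * ψ j y := by
    intro i j; rw [hxy, tpair_tmul]
  have E : ∀ (i : Fin 2) (j : Fin 3),
      u * (φ i e1 * ψ j f1) + v * (φ i e2 * ψ j f2) + w * (φ i e2 * ψ j f3)
        = φ i x * ψ j y := by
    intro i j
    have := key i j
    simpa [map_add, map_smul, smul_eq_mul] using this
  have E11 := E 0 0; have E12 := E 0 1; have E13 := E 0 2
  have E21 := E 1 0; have E22 := E 1 1; have E23 := E 1 2
  rw [hφ11, hφ12, hψ11, hψ12, hψ13] at E11
  rw [hφ11, hφ12, hψ21, hψ22, hψ23] at E12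
  rw [hφ11, hφ12, hψ31, hψ32, hψ33] at E13
  rw [hφ21, hφ22, hψ11, hψ12, hψ13] at E21
  rw [hφ21, hφ22, hψ21, hψ22, hψ23] at E22
  rw [hφ21, hφ22, hψ31, hψ32, hψ33] at E23
  -- E11 : u = φ0 x * ψ0 y, E12 : 0 = φ0 x * ψ1 y, E13 : 0 = φ0 x * ψ2 y
  -- E21 : 0 = φ1 x * ψ0 y, E22 : v = φ1 x * ψ1 y, E23 : w = φ1 x * ψ2 y
  simp only [mul_one, mul_zero, add_zero, zero_add] at E11 E12 E13 E21 E22 E23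
  by_cases hu : u = 0
  · exact Or.inl hu
  · refine Or.inr ⟨?_, ?_⟩
    · have : u * v = (φ 0 x * ψ 1 y) * (φ 1 x * ψ 0 y) := by
        rw [E11, E22]; ring
      rw [← E12, ← E21] at this
      simpa [hu] using this
    · have : u * w = (φ 0 x * ψ 2 y) * (φ 1 x * ψ 0 y) := by
        rw [E11, E23]; ring
      rw [← E13, ← E21] at this
      simpa [hu] using this
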